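/- Under the conditions 0 < E₁q₀ < 1, 0 < α < min{α₀⁽¹⁾, α₁⁽¹⁾} where α₀⁽¹⁾ = (4/27)(1 − E₁q₀)³/(a²q₀) and α₁⁽¹⁾ = 1/(3q₀(1 − E₁q₀)), and p ∈ (p₁⁽¹⁾, p₂⁽¹⁾) (positive zeros of αq₀p³ − (1−E₁q₀)p + a) with t₁ = q₀(E₁ + 3αp²) < 1, the operator T₁(U) = −A₁U + αF(U) + f is a contraction of the closed ball of radius p in C(γ) and has a unique fixed point there. -/

import Mathlib

/-- The nonlinear operator `T₁(U) = −A₁U + αF(U) + f` of the lossy-layer problem, with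
`A₁` the integral operator with kernel `k₁(z,z₀) = −(iκ/(2cosφ))exp(i·2κcosφ|z−z₀|·ε₂(z₀))`
weighted by `ε₁`, `F` the Kerr cubic integral operator with kernel
`k(t) = (iκ/(2cosφ))e^{2iκcosφ|t|}`, and `f(z) = a·e^{−iκcosφ(z−2πδ)}`. -/
noncomputable def Tmap1 (δ κ α a φ : ℝ) (ε₁ ε₂ : ℝ → ℝ) (U : ℝ → ℂ) (z : ℝ) : ℂ :=
  -(∫ z₀ in (-(2 * Real.pi * δ))..(2 * Real.pi * δ),
      (-(Complex.I * κ / (2 * Real.cos φ))) *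
        Complex.exp (Complex.I * (2 * κ * Real.cos φ * |z - z₀| * ε₂ z₀)) *
        ((ε₁ z₀ : ℝ) : ℂ) * U z₀)
  + α * (∫ z₀ in (-(2 * Real.pi * δ))..(2 * Real.pi * δ),
      (Complex.I * κ / (2 * Real.cos φ)) *
        Complex.exp (2 * Complex.I * κ * Real.cos φ * |z - z₀|) *
        ((‖U z₀‖ ^ 2 : ℝ) : ℂ) * U z₀)
  + a * Complex.exp (-Complex.I * κ * Real.cos φ * (z - 2 * Real.pi * δ))

open intervalIntegral MeasureTheory Set

namespace Stmt11Aux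

lemma cubic_diff (p : ℝ) (u v : ℂ) (hu : ‖u‖ ≤ p) (hv : ‖v‖ ≤ p) :
    ‖((‖u‖^2 : ℝ) : ℂ) * u - ((‖v‖^2 : ℝ) : ℂ) * v‖ ≤ 3 * p^2 * ‖u - v‖ := by
  have hp : 0 ≤ p := le_trans (norm_nonneg u) hu
  have key : ((‖u‖^2 : ℝ) : ℂ) * u - ((‖v‖^2 : ℝ) : ℂ) * v
      = ((‖u‖^2 : ℝ) : ℂ) * (u - v) + (((‖u‖^2 - ‖v‖^2 : ℝ)) : ℂ) * v := by
    push_cast; ring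
  rw [key]
  have e1 : ‖((‖u‖^2 : ℝ) : ℂ) * (u - v)‖ = ‖u‖^2 * ‖u - v‖ := by
    rw [norm_mul, Complex.norm_real, Real.norm_eq_abs,
      _root_.abs_of_nonneg (pow_nonneg (norm_nonneg u) 2)]
  have e2 : ‖(((‖u‖^2 - ‖v‖^2 : ℝ)) : ℂ) * v‖ = |‖u‖^2 - ‖v‖^2| * ‖v‖ := by
    rw [norm_mul, Complex.norm_real, Real.norm_eq_abs]
  have h1 : |‖u‖ - ‖v‖| ≤ ‖u - v‖ := abs_norm_sub_norm_le u v
  have h2 : |‖u‖^2 - ‖v‖^2| = |‖u‖ - ‖v‖| * |‖u‖ + ‖v‖| := by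
    rw [← abs_mul]; ring_nf
  have h3 : |‖u‖ + ‖v‖| ≤ 2 * p := by
    rw [_root_.abs_of_nonneg (by positivity)]; linarith
  have h4 : |‖u‖^2 - ‖v‖^2| ≤ 2 * p * ‖u - v‖ := by
    rw [h2]
    calc |‖u‖ - ‖v‖| * |‖u‖ + ‖v‖| ≤ ‖u - v‖ * (2 * p) :=
          mul_le_mul h1 h3 (abs_nonneg _) (norm_nonneg _)
      _ = 2 * p * ‖u - v‖ := by ring
  calc ‖((‖u‖^2 : ℝ) : ℂ) * (u - v) + (((‖u‖^2 - ‖v‖^2 : ℝ)) : ℂ) * v‖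
      ≤ ‖u‖^2 * ‖u - v‖ + |‖u‖^2 - ‖v‖^2| * ‖v‖ := by
        rw [← e1, ← e2]; exact norm_add_le _ _
    _ ≤ 3 * p^2 * ‖u - v‖ := by
        nlinarith [mul_le_mul h4 hv (norm_nonneg v) (by positivity : (0:ℝ) ≤ 2 * p * ‖u - v‖),
          mul_le_mul (mul_le_mul hu hu (norm_nonneg u) hp) le_rfl
            (norm_nonneg (u - v)) (by positivity : (0:ℝ) ≤ p * p),
          norm_nonneg (u - v), sq_nonneg ‖u‖]

lemma cubic_nonpos (b c a p₁ p₂ p : ℝ) (hb : 0 < b)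
    (hz₁ : b * p₁ ^ 3 - c * p₁ + a = 0) (hz₂ : b * p₂ ^ 3 - c * p₂ + a = 0)
    (hp₁ : 0 < p₁) (hpl : p₁ < p) (hpr : p < p₂) : b * p ^ 3 - c * p + a ≤ 0 := by
  have hne : p₁ - p₂ ≠ 0 := by intro h; nlinarith [sub_eq_zero.1 h]
  have s : b * (p₁^2 + p₁*p₂ + p₂^2) - c = 0 := by
    have hfac : (p₁ - p₂) * (b * (p₁^2 + p₁*p₂ + p₂^2) - c) = 0 := by
      linear_combination hz₁ - hz₂
    rcases mul_eq_zero.1 hfac with h' | h'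
    · exact absurd h' hne
    · exact h'
  have ha' : a = b * (p₁^2*p₂ + p₁*p₂^2) := by linear_combination hz₁ - p₁ * s
  have key : b * p ^ 3 - c * p + a = b * (p - p₁) * (p - p₂) * (p + p₁ + p₂) := by
    linear_combination p * s + ha'
  rw [key]
  nlinarith [mul_pos (mul_pos hb (sub_pos.2 hpl)) (show (0:ℝ) < p + p₁ + p₂ by linarith),
    sub_pos.2 hpr]

lemma integral_bound (δ : ℝ) (hδ : 0 < δ) (g : ℝ → ℂ) (C : ℝ)
    (hg : ∀ z₀ ∈ Set.Icc (-(2*Real.pi*δ)) (2*Real.pi*δ), ‖g z₀‖ ≤ C) :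
    ‖∫ z₀ in (-(2*Real.pi*δ))..(2*Real.pi*δ), g z₀‖ ≤ C * (4*Real.pi*δ) := by
  have hL : (0:ℝ) ≤ 2*Real.pi*δ := by positivity
  have h : ∀ x ∈ Set.uIoc (-(2*Real.pi*δ)) (2*Real.pi*δ), ‖g x‖ ≤ C := by
    intro x hx
    apply hg
    rw [Set.uIoc_of_le (by linarith)] at hx
    exact Set.Ioc_subset_Icc_self hx
  calc ‖∫ z₀ in (-(2*Real.pi*δ))..(2*Real.pi*δ), g z₀‖
        ≤ C * |2*Real.pi*δ - (-(2*Real.pi*δ))| :=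
        intervalIntegral.norm_integral_le_of_norm_le_const h
    _ = C * (4*Real.pi*δ) := by
        rw [show (2*Real.pi*δ - (-(2*Real.pi*δ))) = 4*Real.pi*δ by ring,
          _root_.abs_of_nonneg (by positivity)]

-- norm of the linear kernel applied term
lemma norm_term1 (κ c t e w : ℝ) (u : ℂ) (hκ : 0 < κ) (hc : 0 < c) (he : 0 ≤ e) :
    ‖(-(Complex.I * κ / (2 * (c:ℝ)))) *
        Complex.exp (Complex.I * (2 * (κ:ℂ) * (c:ℂ) * (t:ℂ) * (w:ℂ))) * ((e : ℝ) : ℂ) * u‖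
      = κ / (2 * c) * e * ‖u‖ := by
  simp [norm_mul, norm_div, Real.norm_eq_abs, Complex.norm_exp,
    Complex.norm_real, abs_of_pos hκ, abs_of_pos hc, _root_.abs_of_nonneg he, Complex.exp_re]

lemma norm_term2 (κ c t : ℝ) (u : ℂ) (hκ : 0 < κ) (hc : 0 < c) :
    ‖(Complex.I * κ / (2 * (c:ℝ))) *
        Complex.exp (2 * Complex.I * κ * (c:ℝ) * (t:ℂ)) * u‖
      = κ / (2 * c) * ‖u‖ := by
  simp [norm_mul, norm_div, Real.norm_eq_abs, Complex.norm_exp,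
    Complex.norm_real, abs_of_pos hκ, abs_of_pos hc, Complex.exp_re]

lemma norm_term3 (a κ c z δ : ℝ) (ha : 0 ≤ a) :
    ‖(a:ℂ) * Complex.exp (-Complex.I * κ * (c:ℝ) * ((z:ℂ) - 2 * Real.pi * δ))‖ = a := by
  simp [norm_mul, Real.norm_eq_abs, Complex.norm_exp, Complex.norm_real,
    _root_.abs_of_nonneg ha, Complex.exp_re]

end Stmt11Aux

namespace Stmt11Aux

lemma Tmap1_norm_le (δ κ α a E₁ φ q₀ p : ℝ) (ε₁ ε₂ : ℝ → ℝ)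
    (hδ : 0 < δ) (hκ : 0 < κ) (hα : 0 < α) (ha : 0 < a)
    (hcos : 0 < Real.cos φ) (hq₀ : q₀ = 2 * Real.pi * δ * κ / Real.cos φ)
    (hb1 : ∀ z ∈ Set.Icc (-(2 * Real.pi * δ)) (2 * Real.pi * δ), 0 < ε₁ z ∧ ε₁ z ≤ E₁)
    (hp0 : 0 ≤ p)
    (W : ℝ → ℂ) (hW : ∀ z ∈ Set.Icc (-(2 * Real.pi * δ)) (2 * Real.pi * δ), ‖W z‖ ≤ p)
    (z : ℝ) :
    ‖Tmap1 δ κ α a φ ε₁ ε₂ W z‖ ≤ E₁ * q₀ * p + α * q₀ * p ^ 3 + a := by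
  have hK : (0:ℝ) ≤ κ / (2 * Real.cos φ) := by positivity
  have hE₁ : (0:ℝ) ≤ E₁ := by
    have h0 : (0:ℝ) ∈ Set.Icc (-(2 * Real.pi * δ)) (2 * Real.pi * δ) := by
      constructor <;> [linarith [Real.pi_pos, mul_pos (mul_pos two_pos Real.pi_pos) hδ];
        positivity]
    linarith [(hb1 0 h0).1, (hb1 0 h0).2]
  have hI1 : ‖∫ z₀ in (-(2 * Real.pi * δ))..(2 * Real.pi * δ),
      (-(Complex.I * κ / (2 * Real.cos φ))) *
        Complex.exp (Complex.I * (2 * κ * Real.cos φ * |z - z₀| * ε₂ z₀)) *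
        ((ε₁ z₀ : ℝ) : ℂ) * W z₀‖ ≤ (κ / (2 * Real.cos φ) * (E₁ * p)) * (4 * Real.pi * δ) := by
    apply integral_bound δ hδ
    intro z₀ hz₀
    rw [norm_term1 κ (Real.cos φ) |z - z₀| (ε₁ z₀) (ε₂ z₀) (W z₀) hκ hcos (hb1 z₀ hz₀).1.le]
    have := mul_le_mul (hb1 z₀ hz₀).2 (hW z₀ hz₀) (norm_nonneg _) hE₁
    rw [mul_assoc]
    exact mul_le_mul_of_nonneg_left this hK
  have hI2 : ‖∫ z₀ in (-(2 * Real.pi * δ))..(2 * Real.pi * δ),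
      (Complex.I * κ / (2 * Real.cos φ)) *
        Complex.exp (2 * Complex.I * κ * Real.cos φ * |z - z₀|) *
        ((‖W z₀‖ ^ 2 : ℝ) : ℂ) * W z₀‖ ≤ (κ / (2 * Real.cos φ) * p ^ 3) * (4 * Real.pi * δ) := by
    apply integral_bound δ hδ
    intro z₀ hz₀
    rw [mul_assoc, norm_term2 κ (Real.cos φ) |z - z₀| _ hκ hcos]
    have hWz := hW z₀ hz₀
    have : ‖((‖W z₀‖ ^ 2 : ℝ) : ℂ) * W z₀‖ ≤ p ^ 3 := by
      rw [norm_mul, Complex.norm_real, Real.norm_eq_abs,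
        _root_.abs_of_nonneg (pow_nonneg (norm_nonneg _) 2)]
      nlinarith [pow_le_pow_left₀ (norm_nonneg (W z₀)) hWz 3]
    exact mul_le_mul_of_nonneg_left this hK
  have hf : ‖(a:ℂ) * Complex.exp (-Complex.I * κ * Real.cos φ * (z - 2 * Real.pi * δ))‖ = a :=
    norm_term3 a κ (Real.cos φ) z δ ha.le
  have htri : ‖Tmap1 δ κ α a φ ε₁ ε₂ W z‖ ≤
      (κ / (2 * Real.cos φ) * (E₁ * p)) * (4 * Real.pi * δ)
      + α * ((κ / (2 * Real.cos φ) * p ^ 3) * (4 * Real.pi * δ)) + a := by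
    unfold Tmap1
    refine le_trans (norm_add_le _ _) ?_
    gcongr
    · refine le_trans (norm_add_le _ _) ?_
      gcongr
      · rwa [norm_neg]
      · rw [norm_mul, Complex.norm_real, Real.norm_eq_abs, _root_.abs_of_pos hα]
        exact mul_le_mul_of_nonneg_left hI2 hα.le
    · exact le_of_eq hf
  refine le_trans htri (le_of_eq ?_)
  subst hq₀
  field_simp
  ring

end Stmt11Aux

namespace Stmt11Aux

lemma Tmap1_lip (δ κ α a E₁ φ q₀ p : ℝ) (ε₁ ε₂ : ℝ → ℝ)
    (hδ : 0 < δ) (hκ : 0 < κ) (hα : 0 < α)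
    (hcos : 0 < Real.cos φ) (hq₀ : q₀ = 2 * Real.pi * δ * κ / Real.cos φ)
    (h1 : Continuous ε₁) (h2 : Continuous ε₂)
    (hb1 : ∀ z ∈ Set.Icc (-(2 * Real.pi * δ)) (2 * Real.pi * δ), 0 < ε₁ z ∧ ε₁ z ≤ E₁)
    (U V : ℝ → ℂ)
    (hUc : ContinuousOn U (Set.Icc (-(2 * Real.pi * δ)) (2 * Real.pi * δ)))
    (hVc : ContinuousOn V (Set.Icc (-(2 * Real.pi * δ)) (2 * Real.pi * δ)))
    (hU : ∀ z ∈ Set.Icc (-(2 * Real.pi * δ)) (2 * Real.pi * δ), ‖U z‖ ≤ p)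
    (hV : ∀ z ∈ Set.Icc (-(2 * Real.pi * δ)) (2 * Real.pi * δ), ‖V z‖ ≤ p)
    (M : ℝ) (hM : ∀ z ∈ Set.Icc (-(2 * Real.pi * δ)) (2 * Real.pi * δ), ‖U z - V z‖ ≤ M)
    (z : ℝ) :
    ‖Tmap1 δ κ α a φ ε₁ ε₂ U z - Tmap1 δ κ α a φ ε₁ ε₂ V z‖ ≤
      q₀ * (E₁ + 3 * α * p ^ 2) * M := by
  have hπδ : (0:ℝ) < 2 * Real.pi * δ := by positivity
  have hle : -(2 * Real.pi * δ) ≤ (2 * Real.pi * δ) := by linarith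
  have hK : (0:ℝ) ≤ κ / (2 * Real.cos φ) := by positivity
  have h0mem : (0:ℝ) ∈ Set.Icc (-(2 * Real.pi * δ)) (2 * Real.pi * δ) := by
    constructor <;> linarith
  have hM0 : 0 ≤ M := le_trans (norm_nonneg _) (hM 0 h0mem)
  have hE₁ : (0:ℝ) ≤ E₁ := by linarith [(hb1 0 h0mem).1, (hb1 0 h0mem).2]
  have hp0 : (0:ℝ) ≤ p := le_trans (norm_nonneg _) (hU 0 h0mem)
  -- integrability of the linear part
  have hint1 : ∀ W : ℝ → ℂ, ContinuousOn W (Set.Icc (-(2 * Real.pi * δ)) (2 * Real.pi * δ)) →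
      IntervalIntegrable (fun z₀ => (-(Complex.I * (κ:ℂ) / (2 * (Real.cos φ : ℂ)))) *
        Complex.exp (Complex.I * (2 * (κ:ℂ) * (Real.cos φ:ℂ) * (|z - z₀|:ℝ) * ((ε₂ z₀ : ℝ):ℂ))) *
        ((ε₁ z₀ : ℝ) : ℂ) * W z₀) MeasureTheory.volume
        (-(2 * Real.pi * δ)) (2 * Real.pi * δ) := by
    intro W hWc
    apply ContinuousOn.intervalIntegrable
    rw [Set.uIcc_of_le hle]
    exact (by fun_prop : Continuous fun z₀ : ℝ =>
      (-(Complex.I * (κ:ℂ) / (2 * (Real.cos φ : ℂ)))) *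
        Complex.exp (Complex.I * (2 * (κ:ℂ) * (Real.cos φ:ℂ) * (|z - z₀|:ℝ) * ((ε₂ z₀ : ℝ):ℂ))) *
        ((ε₁ z₀ : ℝ) : ℂ)).continuousOn.mul hWc
  have hint2 : ∀ W : ℝ → ℂ, ContinuousOn W (Set.Icc (-(2 * Real.pi * δ)) (2 * Real.pi * δ)) →
      IntervalIntegrable (fun z₀ => (Complex.I * (κ:ℂ) / (2 * (Real.cos φ : ℂ))) *
        Complex.exp (2 * Complex.I * (κ:ℂ) * (Real.cos φ:ℂ) * (|z - z₀|:ℝ)) *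
        ((‖W z₀‖ ^ 2 : ℝ) : ℂ) * W z₀) MeasureTheory.volume
        (-(2 * Real.pi * δ)) (2 * Real.pi * δ) := by
    intro W hWc
    apply ContinuousOn.intervalIntegrable
    rw [Set.uIcc_of_le hle]
    have hc1 : Continuous fun z₀ : ℝ => (Complex.I * (κ:ℂ) / (2 * (Real.cos φ : ℂ))) *
        Complex.exp (2 * Complex.I * (κ:ℂ) * (Real.cos φ:ℂ) * (|z - z₀|:ℝ)) := by fun_prop
    have hsq : ContinuousOn (fun z₀ : ℝ => ((‖W z₀‖ ^ 2 : ℝ) : ℂ))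
        (Set.Icc (-(2 * Real.pi * δ)) (2 * Real.pi * δ)) :=
      Complex.continuous_ofReal.comp_continuousOn ((hWc.norm).pow 2)
    exact ((hc1.continuousOn.mul hsq)).mul hWc
  -- difference of the linear integrals
  have hdiff1 : (∫ z₀ in (-(2 * Real.pi * δ))..(2 * Real.pi * δ),
        (-(Complex.I * (κ:ℂ) / (2 * (Real.cos φ : ℂ)))) *
          Complex.exp (Complex.I * (2 * (κ:ℂ) * (Real.cos φ:ℂ) * (|z - z₀|:ℝ) * ((ε₂ z₀ : ℝ):ℂ))) *
          ((ε₁ z₀ : ℝ) : ℂ) * U z₀)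
      - (∫ z₀ in (-(2 * Real.pi * δ))..(2 * Real.pi * δ),
        (-(Complex.I * (κ:ℂ) / (2 * (Real.cos φ : ℂ)))) *
          Complex.exp (Complex.I * (2 * (κ:ℂ) * (Real.cos φ:ℂ) * (|z - z₀|:ℝ) * ((ε₂ z₀ : ℝ):ℂ))) *
          ((ε₁ z₀ : ℝ) : ℂ) * V z₀)
      = ∫ z₀ in (-(2 * Real.pi * δ))..(2 * Real.pi * δ),
        (-(Complex.I * (κ:ℂ) / (2 * (Real.cos φ : ℂ)))) *
          Complex.exp (Complex.I * (2 * (κ:ℂ) * (Real.cos φ:ℂ) * (|z - z₀|:ℝ) * ((ε₂ z₀ : ℝ):ℂ))) *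
          ((ε₁ z₀ : ℝ) : ℂ) * (U z₀ - V z₀) := by
    rw [← intervalIntegral.integral_sub (hint1 U hUc) (hint1 V hVc)]
    apply intervalIntegral.integral_congr
    intro x hx
    ring
  have hdiff2 : (∫ z₀ in (-(2 * Real.pi * δ))..(2 * Real.pi * δ),
        (Complex.I * (κ:ℂ) / (2 * (Real.cos φ : ℂ))) *
          Complex.exp (2 * Complex.I * (κ:ℂ) * (Real.cos φ:ℂ) * (|z - z₀|:ℝ)) *
          ((‖U z₀‖ ^ 2 : ℝ) : ℂ) * U z₀)
      - (∫ z₀ in (-(2 * Real.pi * δ))..(2 * Real.pi * δ),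
        (Complex.I * (κ:ℂ) / (2 * (Real.cos φ : ℂ))) *
          Complex.exp (2 * Complex.I * (κ:ℂ) * (Real.cos φ:ℂ) * (|z - z₀|:ℝ)) *
          ((‖V z₀‖ ^ 2 : ℝ) : ℂ) * V z₀)
      = ∫ z₀ in (-(2 * Real.pi * δ))..(2 * Real.pi * δ),
        (Complex.I * (κ:ℂ) / (2 * (Real.cos φ : ℂ))) *
          Complex.exp (2 * Complex.I * (κ:ℂ) * (Real.cos φ:ℂ) * (|z - z₀|:ℝ)) *
          (((‖U z₀‖ ^ 2 : ℝ) : ℂ) * U z₀ - ((‖V z₀‖ ^ 2 : ℝ) : ℂ) * V z₀) := by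
    rw [← intervalIntegral.integral_sub (hint2 U hUc) (hint2 V hVc)]
    apply intervalIntegral.integral_congr
    intro x hx
    ring
  have hsplit : Tmap1 δ κ α a φ ε₁ ε₂ U z - Tmap1 δ κ α a φ ε₁ ε₂ V z
      = -((∫ z₀ in (-(2 * Real.pi * δ))..(2 * Real.pi * δ),
        (-(Complex.I * (κ:ℂ) / (2 * (Real.cos φ : ℂ)))) *
          Complex.exp (Complex.I * (2 * (κ:ℂ) * (Real.cos φ:ℂ) * (|z - z₀|:ℝ) * ((ε₂ z₀ : ℝ):ℂ))) *
          ((ε₁ z₀ : ℝ) : ℂ) * (U z₀ - V z₀)))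
      + (α:ℂ) * (∫ z₀ in (-(2 * Real.pi * δ))..(2 * Real.pi * δ),
        (Complex.I * (κ:ℂ) / (2 * (Real.cos φ : ℂ))) *
          Complex.exp (2 * Complex.I * (κ:ℂ) * (Real.cos φ:ℂ) * (|z - z₀|:ℝ)) *
          (((‖U z₀‖ ^ 2 : ℝ) : ℂ) * U z₀ - ((‖V z₀‖ ^ 2 : ℝ) : ℂ) * V z₀)) := by
    rw [← hdiff1, ← hdiff2]
    unfold Tmap1
    ring
  rw [hsplit]
  have hb₁ : ‖∫ z₀ in (-(2 * Real.pi * δ))..(2 * Real.pi * δ),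
        (-(Complex.I * (κ:ℂ) / (2 * (Real.cos φ : ℂ)))) *
          Complex.exp (Complex.I * (2 * (κ:ℂ) * (Real.cos φ:ℂ) * (|z - z₀|:ℝ) * ((ε₂ z₀ : ℝ):ℂ))) *
          ((ε₁ z₀ : ℝ) : ℂ) * (U z₀ - V z₀)‖
      ≤ (κ / (2 * Real.cos φ) * (E₁ * M)) * (4 * Real.pi * δ) := by
    apply integral_bound δ hδ
    intro z₀ hz₀
    rw [norm_term1 κ (Real.cos φ) |z - z₀| (ε₁ z₀) (ε₂ z₀) _ hκ hcos (hb1 z₀ hz₀).1.le]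
    have := mul_le_mul (hb1 z₀ hz₀).2 (hM z₀ hz₀) (norm_nonneg _) hE₁
    rw [mul_assoc]
    exact mul_le_mul_of_nonneg_left this hK
  have hb₂ : ‖∫ z₀ in (-(2 * Real.pi * δ))..(2 * Real.pi * δ),
        (Complex.I * (κ:ℂ) / (2 * (Real.cos φ : ℂ))) *
          Complex.exp (2 * Complex.I * (κ:ℂ) * (Real.cos φ:ℂ) * (|z - z₀|:ℝ)) *
          (((‖U z₀‖ ^ 2 : ℝ) : ℂ) * U z₀ - ((‖V z₀‖ ^ 2 : ℝ) : ℂ) * V z₀)‖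
      ≤ (κ / (2 * Real.cos φ) * (3 * p ^ 2 * M)) * (4 * Real.pi * δ) := by
    apply integral_bound δ hδ
    intro z₀ hz₀
    rw [norm_term2 κ (Real.cos φ) |z - z₀| _ hκ hcos]
    have hcd := cubic_diff p (U z₀) (V z₀) (hU z₀ hz₀) (hV z₀ hz₀)
    have hmm : 3 * p ^ 2 * ‖U z₀ - V z₀‖ ≤ 3 * p ^ 2 * M :=
      mul_le_mul_of_nonneg_left (hM z₀ hz₀) (by positivity)
    exact mul_le_mul_of_nonneg_left (le_trans hcd hmm) hK
  calc ‖-(∫ z₀ in (-(2 * Real.pi * δ))..(2 * Real.pi * δ),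
        (-(Complex.I * (κ:ℂ) / (2 * (Real.cos φ : ℂ)))) *
          Complex.exp (Complex.I * (2 * (κ:ℂ) * (Real.cos φ:ℂ) * (|z - z₀|:ℝ) * ((ε₂ z₀ : ℝ):ℂ))) *
          ((ε₁ z₀ : ℝ) : ℂ) * (U z₀ - V z₀))
      + (α:ℂ) * (∫ z₀ in (-(2 * Real.pi * δ))..(2 * Real.pi * δ),
        (Complex.I * (κ:ℂ) / (2 * (Real.cos φ : ℂ))) *
          Complex.exp (2 * Complex.I * (κ:ℂ) * (Real.cos φ:ℂ) * (|z - z₀|:ℝ)) *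
          (((‖U z₀‖ ^ 2 : ℝ) : ℂ) * U z₀ - ((‖V z₀‖ ^ 2 : ℝ) : ℂ) * V z₀))‖
      ≤ (κ / (2 * Real.cos φ) * (E₁ * M)) * (4 * Real.pi * δ)
        + α * ((κ / (2 * Real.cos φ) * (3 * p ^ 2 * M)) * (4 * Real.pi * δ)) := by
        refine le_trans (norm_add_le _ _) ?_
        gcongr
        · rwa [norm_neg]
        · rw [norm_mul, Complex.norm_real, Real.norm_eq_abs, _root_.abs_of_pos hα]
          exact mul_le_mul_of_nonneg_left hb₂ hα.le
    _ = q₀ * (E₁ + 3 * α * p ^ 2) * M := by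
        subst hq₀
        field_simp
        ring

end Stmt11Aux

namespace Stmt11Aux

lemma Tmap1_continuous (δ κ α a φ : ℝ) (ε₁ ε₂ : ℝ → ℝ)
    (h1 : Continuous ε₁) (h2 : Continuous ε₂)
    (U : ℝ → ℂ) (hU : Continuous U) :
    Continuous fun z => Tmap1 δ κ α a φ ε₁ ε₂ U z := by
  unfold Tmap1
  apply Continuous.add
  apply Continuous.add
  · apply Continuous.neg
    apply intervalIntegral.continuous_parametric_intervalIntegral_of_continuous'
      (f := fun (z : ℝ) (z₀ : ℝ) => (-(Complex.I * κ / (2 * Real.cos φ))) *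
        Complex.exp (Complex.I * (2 * κ * Real.cos φ * |z - z₀| * ε₂ z₀)) *
        ((ε₁ z₀ : ℝ) : ℂ) * U z₀)
    fun_prop
  · apply Continuous.mul continuous_const
    apply intervalIntegral.continuous_parametric_intervalIntegral_of_continuous'
      (f := fun (z : ℝ) (z₀ : ℝ) => (Complex.I * κ / (2 * Real.cos φ)) *
        Complex.exp (2 * Complex.I * κ * Real.cos φ * |z - z₀|) *
        ((‖U z₀‖ ^ 2 : ℝ) : ℂ) * U z₀)
    fun_prop
  · fun_prop

end Stmt11Aux


/-- Under `0 < E₁q₀ < 1`, `α < min{α₀⁽¹⁾, α₁⁽¹⁾}`, `p ∈ (p₁⁽¹⁾, p₂⁽¹⁾)` and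
`t₁ = q₀(E₁ + 3αp²) < 1`, the operator `T₁` is a contraction of the closed ball of
radius `p` in `C(γ)` and has a unique fixed point there. -/
theorem stmt_11 (δ κ α a E₁ φ : ℝ)
    (hδ : 0 < δ) (hκ : 0 < κ) (hα : 0 < α) (ha : 0 < a) (hE₁ : 0 < E₁)
    (hφ : |φ| < Real.pi / 2)
    (q₀ : ℝ) (hq₀ : q₀ = 2 * Real.pi * δ * κ / Real.cos φ)
    (ε₁ ε₂ : ℝ → ℝ) (h1 : Continuous ε₁) (h2 : Continuous ε₂)
    (hb1 : ∀ z ∈ Set.Icc (-(2 * Real.pi * δ)) (2 * Real.pi * δ), 0 < ε₁ z ∧ ε₁ z ≤ E₁)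
    (hb2 : ∀ z ∈ Set.Icc (-(2 * Real.pi * δ)) (2 * Real.pi * δ),
      ε₂ z ∈ Set.Ico 0 (Real.pi / 2))
    (hq1 : E₁ * q₀ < 1)
    (hαsmall : α < min ((4 / 27) * (1 - E₁ * q₀) ^ 3 / (a ^ 2 * q₀))
      (1 / (3 * q₀ * (1 - E₁ * q₀))))
    (p₁ p₂ p : ℝ) (hp₁ : 0 < p₁) (hp12 : p₁ < p₂)
    (hz₁ : α * q₀ * p₁ ^ 3 - (1 - E₁ * q₀) * p₁ + a = 0)
    (hz₂ : α * q₀ * p₂ ^ 3 - (1 - E₁ * q₀) * p₂ + a = 0)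
    (hp : p ∈ Set.Ioo p₁ p₂)
    (ht₁ : q₀ * (E₁ + 3 * α * p ^ 2) < 1) :
    (∀ U : ℝ → ℂ, ContinuousOn U (Set.Icc (-(2 * Real.pi * δ)) (2 * Real.pi * δ)) →
      (∀ z ∈ Set.Icc (-(2 * Real.pi * δ)) (2 * Real.pi * δ), ‖U z‖ ≤ p) →
      ∀ z ∈ Set.Icc (-(2 * Real.pi * δ)) (2 * Real.pi * δ),
        ‖Tmap1 δ κ α a φ ε₁ ε₂ U z‖ ≤ p) ∧
    (∀ U V : ℝ → ℂ,
      ContinuousOn U (Set.Icc (-(2 * Real.pi * δ)) (2 * Real.pi * δ)) →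
      ContinuousOn V (Set.Icc (-(2 * Real.pi * δ)) (2 * Real.pi * δ)) →
      (∀ z ∈ Set.Icc (-(2 * Real.pi * δ)) (2 * Real.pi * δ), ‖U z‖ ≤ p) →
      (∀ z ∈ Set.Icc (-(2 * Real.pi * δ)) (2 * Real.pi * δ), ‖V z‖ ≤ p) →
      ∀ M : ℝ, (∀ z ∈ Set.Icc (-(2 * Real.pi * δ)) (2 * Real.pi * δ), ‖U z - V z‖ ≤ M) →
      ∀ z ∈ Set.Icc (-(2 * Real.pi * δ)) (2 * Real.pi * δ),
        ‖Tmap1 δ κ α a φ ε₁ ε₂ U z - Tmap1 δ κ α a φ ε₁ ε₂ V z‖ ≤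
          q₀ * (E₁ + 3 * α * p ^ 2) * M) ∧
    (∃ U : ℝ → ℂ, ContinuousOn U (Set.Icc (-(2 * Real.pi * δ)) (2 * Real.pi * δ)) ∧
      (∀ z ∈ Set.Icc (-(2 * Real.pi * δ)) (2 * Real.pi * δ), ‖U z‖ ≤ p) ∧
      (∀ z ∈ Set.Icc (-(2 * Real.pi * δ)) (2 * Real.pi * δ),
        U z = Tmap1 δ κ α a φ ε₁ ε₂ U z) ∧
      ∀ V : ℝ → ℂ, ContinuousOn V (Set.Icc (-(2 * Real.pi * δ)) (2 * Real.pi * δ)) →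
        (∀ z ∈ Set.Icc (-(2 * Real.pi * δ)) (2 * Real.pi * δ), ‖V z‖ ≤ p) →
        (∀ z ∈ Set.Icc (-(2 * Real.pi * δ)) (2 * Real.pi * δ),
          V z = Tmap1 δ κ α a φ ε₁ ε₂ V z) →
        ∀ z ∈ Set.Icc (-(2 * Real.pi * δ)) (2 * Real.pi * δ), V z = U z) := by
  obtain ⟨hφ1, hφ2⟩ := abs_lt.1 hφ
  have hcos : 0 < Real.cos φ := Real.cos_pos_of_mem_Ioo ⟨by linarith, hφ2⟩
  have hq₀pos : 0 < q₀ := by rw [hq₀]; positivity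
  have hp0 : 0 < p := lt_trans hp₁ hp.1
  have hπδ : (0:ℝ) < 2 * Real.pi * δ := by positivity
  have hle : -(2 * Real.pi * δ) ≤ (2 * Real.pi * δ) := by linarith
  have h0mem : (0:ℝ) ∈ Set.Icc (-(2 * Real.pi * δ)) (2 * Real.pi * δ) := by
    constructor <;> linarith
  have hcubic : E₁ * q₀ * p + α * q₀ * p ^ 3 + a ≤ p := by
    have := Stmt11Aux.cubic_nonpos (α * q₀) (1 - E₁ * q₀) a p₁ p₂ p
      (by positivity) hz₁ hz₂ hp₁ hp.1 hp.2
    nlinarith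
  have hball : ∀ W : ℝ → ℂ,
      (∀ z ∈ Set.Icc (-(2 * Real.pi * δ)) (2 * Real.pi * δ), ‖W z‖ ≤ p) →
      ∀ z : ℝ, ‖Tmap1 δ κ α a φ ε₁ ε₂ W z‖ ≤ p := by
    intro W hW z
    exact le_trans (Stmt11Aux.Tmap1_norm_le δ κ α a E₁ φ q₀ p ε₁ ε₂ hδ hκ hα ha hcos hq₀
      hb1 hp0.le W hW z) hcubic
  have hlip := Stmt11Aux.Tmap1_lip δ κ α a E₁ φ q₀ p ε₁ ε₂ hδ hκ hα hcos hq₀ h1 h2 hb1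
  refine ⟨fun U hUc hUb z _ => hball U hUb z,
    fun U V hUc hVc hUb hVb M hM z _ => hlip U V hUc hVc hUb hVb M hM z, ?_⟩
  -- fixed point via Banach
  haveI : CompactSpace (Set.Icc (-(2 * Real.pi * δ)) (2 * Real.pi * δ)) :=
    isCompact_iff_compactSpace.mp isCompact_Icc
  set X := Metric.closedBall (0 : C(Set.Icc (-(2 * Real.pi * δ)) (2 * Real.pi * δ), ℂ)) p
    with hX
  haveI : CompleteSpace X := IsClosed.completeSpace_coe (hs := Metric.isClosed_closedBall)
  haveI : Nonempty X := ⟨⟨0, Metric.mem_closedBall_self hp0.le⟩⟩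
  have hmemball : ∀ g : C(Set.Icc (-(2 * Real.pi * δ)) (2 * Real.pi * δ), ℂ),
      g ∈ X ↔ ∀ x, ‖g x‖ ≤ p := by
    intro g
    rw [hX, Metric.mem_closedBall, dist_zero_right]
    exact ContinuousMap.norm_le _ hp0.le
  have hextb : ∀ g : X, ∀ z ∈ Set.Icc (-(2 * Real.pi * δ)) (2 * Real.pi * δ),
      ‖Set.IccExtend hle g.1 z‖ ≤ p := by
    intro g z hz
    rw [Set.IccExtend_of_mem hle g.1 hz]
    exact (hmemball g.1).mp g.2 _
  have hextc : ∀ g : X, Continuous (Set.IccExtend hle (⇑g.1)) := fun g =>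
    g.1.continuous.Icc_extend'
  let Φ : X → X := fun g =>
    ⟨⟨fun x => Tmap1 δ κ α a φ ε₁ ε₂ (Set.IccExtend hle g.1) x.1,
      ((Stmt11Aux.Tmap1_continuous δ κ α a φ ε₁ ε₂ h1 h2 _ (hextc g)).comp
        continuous_subtype_val)⟩, by
      rw [hmemball]
      intro x
      exact hball (Set.IccExtend hle g.1) (hextb g) x.1⟩
  have hΦlip : ∀ g h : X, dist (Φ g) (Φ h) ≤ q₀ * (E₁ + 3 * α * p ^ 2) * dist g h := by
    intro g h
    rw [Subtype.dist_eq]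
    rw [ContinuousMap.dist_le (by positivity)]
    intro x
    rw [dist_eq_norm]
    apply hlip _ _ (hextc g).continuousOn (hextc h).continuousOn (hextb g) (hextb h)
      (dist g.1 h.1) _ x.1
    intro z hz
    rw [Set.IccExtend_of_mem hle g.1 hz, Set.IccExtend_of_mem hle h.1 hz, ← dist_eq_norm]
    exact ContinuousMap.dist_apply_le_dist _
  have hcontr : ContractingWith ⟨q₀ * (E₁ + 3 * α * p ^ 2), by positivity⟩ Φ := by
    constructor
    · exact_mod_cast ht₁
    · exact LipschitzWith.of_dist_le_mul hΦlip
  set u := ContractingWith.fixedPoint Φ hcontr with hu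
  have hfix : Φ u = u := ContractingWith.fixedPoint_isFixedPt hcontr
  refine ⟨Set.IccExtend hle u.1, (hextc u).continuousOn, hextb u, ?_, ?_⟩
  · intro z hz
    have h₁ : Set.IccExtend hle u.1 z = u.1 ⟨z, hz⟩ := Set.IccExtend_of_mem hle u.1 hz
    have h₂ : (Φ u).1 ⟨z, hz⟩ = Tmap1 δ κ α a φ ε₁ ε₂ (Set.IccExtend hle u.1) z := rfl
    rw [h₁, ← h₂, hfix]
  · intro V hVc hVb hVfix z hz
    set W := Set.IccExtend hle u.1 with hW
    have hWb : ∀ z ∈ Set.Icc (-(2 * Real.pi * δ)) (2 * Real.pi * δ), ‖W z‖ ≤ p := hextb u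
    have hWc : ContinuousOn W (Set.Icc (-(2 * Real.pi * δ)) (2 * Real.pi * δ)) :=
      (hextc u).continuousOn
    have hWfix : ∀ z ∈ Set.Icc (-(2 * Real.pi * δ)) (2 * Real.pi * δ),
        W z = Tmap1 δ κ α a φ ε₁ ε₂ W z := by
      intro z hz
      have h₁ : W z = u.1 ⟨z, hz⟩ := Set.IccExtend_of_mem hle u.1 hz
      have h₂ : (Φ u).1 ⟨z, hz⟩ = Tmap1 δ κ α a φ ε₁ ε₂ W z := rfl
      rw [h₁, ← h₂, hfix]
    -- maximum of the difference
    obtain ⟨z₀, hz₀mem, hz₀max⟩ := isCompact_Icc.exists_isMaxOn ⟨0, h0mem⟩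
      ((hVc.sub hWc).norm)
    have hmax : ∀ y ∈ Set.Icc (-(2 * Real.pi * δ)) (2 * Real.pi * δ),
        ‖V y - W y‖ ≤ ‖V z₀ - W z₀‖ := fun y hy => hz₀max hy
    have hiter : ‖V z₀ - W z₀‖ ≤ q₀ * (E₁ + 3 * α * p ^ 2) * ‖V z₀ - W z₀‖ := by
      calc ‖V z₀ - W z₀‖
          = ‖Tmap1 δ κ α a φ ε₁ ε₂ V z₀ - Tmap1 δ κ α a φ ε₁ ε₂ W z₀‖ := by
            rw [← hVfix z₀ hz₀mem, ← hWfix z₀ hz₀mem]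
        _ ≤ q₀ * (E₁ + 3 * α * p ^ 2) * ‖V z₀ - W z₀‖ :=
            hlip V W hVc hWc hVb hWb _ hmax z₀
    have hM0 : ‖V z₀ - W z₀‖ ≤ 0 := by nlinarith [norm_nonneg (V z₀ - W z₀)]
    have := hmax z hz
    have : ‖V z - W z‖ ≤ 0 := le_trans this hM0
    have := norm_le_zero_iff.mp this
    exact sub_eq_zero.mp this
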